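/- arXiv:2112.10400 — 7 statements merged into one kernel-verified Lean document; each statement's English description precedes it below -/
import Mathlib

section
/- Define T(γ) = E[(1/2)·max(D,γ)² + C] / E[max(D,γ)] for a nonnegative random variable D with finite second moment and E[D] > 0, and C ≥ 0. If γ* is a fixed point of T (i.e., E[(1/2)max(D,γ*)² + C] = γ*·E[max(D,γ*)]) and γ > γ*, then T(γ) − γ* ≤ γ − γ*. -/
open MeasureTheory

theorem stmt4 {Ω : Type*} [MeasurableSpace Ω] (μ : Measure Ω) [IsProbabilityMeasure μ]
    (D : Ω → ℝ) (C γ γstar : ℝ)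
    (hDmeas : Measurable D) (hDnn : ∀ᵐ ω ∂μ, 0 ≤ D ω)
    (hD2 : Integrable (fun ω => (D ω) ^ 2) μ)
    (hDpos : 0 < ∫ ω, D ω ∂μ) (hC : 0 ≤ C)
    (hfix : ∫ ω, (1 / 2) * (max (D ω) γstar) ^ 2 + C ∂μ =
      γstar * ∫ ω, max (D ω) γstar ∂μ)
    (hγ : γstar < γ) :
    (∫ ω, (1 / 2) * (max (D ω) γ) ^ 2 + C ∂μ) / (∫ ω, max (D ω) γ ∂μ) - γstar ≤
      γ - γstar := by
  -- integrability facts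
  have hD1 : Integrable D μ := by
    refine Integrable.mono' (hD2.add (integrable_const 1)) hDmeas.aestronglyMeasurable ?_
    filter_upwards with ω
    have : |D ω| ≤ (D ω)^2 + 1 := by nlinarith [sq_nonneg (|D ω| - 1), sq_abs (D ω)]
    simpa [Real.norm_eq_abs] using this
  have hMint : ∀ c : ℝ, Integrable (fun ω => max (D ω) c) μ := by
    intro c
    refine Integrable.mono' (hD1.abs.add (integrable_const |c|))
      (hDmeas.max measurable_const).aestronglyMeasurable ?_
    filter_upwards with ω
    simp only [Pi.add_apply, Real.norm_eq_abs]
    exact (abs_max_le_max_abs_abs).trans (max_le (le_add_of_nonneg_right (abs_nonneg _))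
      (le_add_of_nonneg_left (abs_nonneg _)))
  have hM2int : ∀ c : ℝ, Integrable (fun ω => (1/2) * (max (D ω) c)^2) μ := by
    intro c
    refine Integrable.mono' ((hD2.add (integrable_const (c^2))).const_mul 2)
      (((hDmeas.max measurable_const).pow_const 2).aestronglyMeasurable.const_smul (1/2:ℝ)) ?_
    filter_upwards with ω
    rw [Real.norm_eq_abs]
    have h1 : |max (D ω) c| ≤ |D ω| + |c| :=
      (abs_max_le_max_abs_abs).trans (max_le (le_add_of_nonneg_right (abs_nonneg _))
        (le_add_of_nonneg_left (abs_nonneg _)))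
    have h2 : (max (D ω) c)^2 ≤ 2 * ((D ω)^2 + c^2) := by
      nlinarith [sq_abs (max (D ω) c), sq_abs (D ω), sq_abs c,
        sq_nonneg (|D ω| - |c|), mul_self_le_mul_self (abs_nonneg (max (D ω) c)) h1,
        abs_nonneg (max (D ω) c)]
    calc |(1/2) * (max (D ω) c)^2| = (1/2) * (max (D ω) c)^2 := by
          rw [abs_of_nonneg]; positivity
      _ ≤ 2 * ((D ω)^2 + c^2) := by nlinarith [sq_nonneg (max (D ω) c)]
  -- pointwise key inequality
  have key : ∀ ω, (1/2) * (max (D ω) γ)^2 - γ * max (D ω) γ ≤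
      (1/2) * (max (D ω) γstar)^2 - γ * max (D ω) γstar := by
    intro ω
    rcases le_or_gt (D ω) γ with h | h
    · have h1 : max (D ω) γ = γ := max_eq_right h
      have h2 : max (D ω) γstar ≤ γ := max_le h hγ.le
      rw [h1]; nlinarith [sq_nonneg (γ - max (D ω) γstar)]
    · rw [max_eq_left h.le, max_eq_left (le_of_lt (hγ.trans h))]
  -- integrate
  have hint : (∫ ω, (1/2) * (max (D ω) γ)^2 - γ * max (D ω) γ ∂μ) ≤
      ∫ ω, (1/2) * (max (D ω) γstar)^2 - γ * max (D ω) γstar ∂μ := by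
    refine integral_mono ?_ ?_ key
    · exact (hM2int γ).sub ((hMint γ).const_mul γ)
    · exact (hM2int γstar).sub ((hMint γstar).const_mul γ)
  rw [integral_sub (hM2int γ) ((hMint γ).const_mul γ),
      integral_sub (hM2int γstar) ((hMint γstar).const_mul γ)] at hint
  simp only [integral_const_mul] at hint
  -- fixed point expansion
  have hfix' : (∫ ω, (1/2) * (max (D ω) γstar)^2 ∂μ) + C =
      γstar * ∫ ω, max (D ω) γstar ∂μ := by
    rw [← hfix, integral_add (hM2int γstar) (integrable_const C), integral_const]
    simp
  have hMsnn : 0 ≤ ∫ ω, max (D ω) γstar ∂μ := by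
    refine integral_nonneg_of_ae ?_
    filter_upwards [hDnn] with ω h
    exact le_max_of_le_left h
  -- A ≤ γ * B
  have hA : (∫ ω, (1/2) * (max (D ω) γ)^2 + C ∂μ) ≤ γ * ∫ ω, max (D ω) γ ∂μ := by
    rw [integral_add (hM2int γ) (integrable_const C), integral_const]
    simp only [measure_univ, probReal_univ, ENNReal.toReal_one, smul_eq_mul, one_mul, integral_const_mul] at *
    nlinarith [hint, hfix', hMsnn, mul_nonneg (sub_nonneg.mpr hγ.le) hMsnn]
  -- B > 0
  have hB : 0 < ∫ ω, max (D ω) γ ∂μ := by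
    refine hDpos.trans_le (integral_mono hD1 (hMint γ) fun ω => le_max_left _ _)
  have := (div_le_iff₀ hB).mpr (by linarith : (∫ ω, (1/2) * (max (D ω) γ)^2 + C ∂μ) ≤ γ * ∫ ω, max (D ω) γ ∂μ)
  linarith
end

section
/- With T and γ* as in the fixed-point setup, if γ > γ* > 0 then T(γ) ≥ γ*, i.e., T(γ) − γ* ≥ 0. -/
open MeasureTheory

theorem stmt5 {Ω : Type*} [MeasurableSpace Ω] (μ : Measure Ω) [IsProbabilityMeasure μ]
    (D : Ω → ℝ) (C γ γstar : ℝ)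
    (hDmeas : Measurable D) (hDnn : ∀ᵐ ω ∂μ, 0 ≤ D ω)
    (hD2 : Integrable (fun ω => (D ω) ^ 2) μ)
    (hDpos : 0 < ∫ ω, D ω ∂μ) (hC : 0 ≤ C)
    (hfix : ∫ ω, (1 / 2) * (max (D ω) γstar) ^ 2 + C ∂μ =
      γstar * ∫ ω, max (D ω) γstar ∂μ)
    (hγstar : 0 < γstar) (hγ : γstar < γ) :
    0 ≤ (∫ ω, (1 / 2) * (max (D ω) γ) ^ 2 + C ∂μ) / (∫ ω, max (D ω) γ ∂μ) - γstar := by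
  -- integrability facts
  have hInt : ∀ c : ℝ, 0 < c → Integrable (fun ω => max (D ω) c) μ ∧
      Integrable (fun ω => (max (D ω) c) ^ 2) μ := by
    intro c hc
    have hg : Integrable (fun ω => (D ω) ^ 2 + (c ^ 2 + 1)) μ := hD2.add (integrable_const _)
    have hm : Measurable (fun ω => max (D ω) c) := hDmeas.max measurable_const
    constructor
    · refine hg.mono hm.aestronglyMeasurable ?_
      filter_upwards [hDnn] with ω hω
      have h1 : |max (D ω) c| = max (D ω) c := abs_of_nonneg (le_max_of_le_right hc.le)
      rw [Real.norm_eq_abs, Real.norm_eq_abs, h1,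
        abs_of_nonneg (by positivity : (0:ℝ) ≤ (D ω) ^ 2 + (c ^ 2 + 1))]
      rcases max_cases (D ω) c with ⟨h, _⟩ | ⟨h, _⟩ <;> rw [h] <;> nlinarith
    · refine hg.mono (hm.pow_const 2).aestronglyMeasurable ?_
      filter_upwards [hDnn] with ω hω
      rw [Real.norm_eq_abs, Real.norm_eq_abs, abs_of_nonneg (by positivity : (0:ℝ) ≤ (max (D ω) c) ^ 2),
        abs_of_nonneg (by positivity : (0:ℝ) ≤ (D ω) ^ 2 + (c ^ 2 + 1))]
      rcases max_cases (D ω) c with ⟨h, _⟩ | ⟨h, _⟩ <;> rw [h] <;> nlinarith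
  obtain ⟨hIγ, hIγ2⟩ := hInt γ (hγstar.trans hγ)
  obtain ⟨hIs, hIs2⟩ := hInt γstar hγstar
  have hIγ2C : Integrable (fun ω => (1 / 2) * (max (D ω) γ) ^ 2 + C) μ :=
    ((hIγ2.const_mul _).add (integrable_const _))
  have hIs2C : Integrable (fun ω => (1 / 2) * (max (D ω) γstar) ^ 2 + C) μ :=
    ((hIs2.const_mul _).add (integrable_const _))
  -- denominator positive
  have hBpos : 0 < ∫ ω, max (D ω) γ ∂μ := by
    have : (γstar : ℝ) < ∫ ω, max (D ω) γ ∂μ := by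
      calc γstar < γ := hγ
        _ = ∫ _ω, γ ∂μ := by simp
        _ ≤ ∫ ω, max (D ω) γ ∂μ := by
            refine integral_mono (integrable_const _) hIγ ?_
            intro ω; exact le_max_right _ _
    linarith
  -- key pointwise inequality
  have hpoint : ∀ᵐ ω ∂μ, (1 / 2) * (max (D ω) γstar) ^ 2 + C - γstar * max (D ω) γstar ≤
      (1 / 2) * (max (D ω) γ) ^ 2 + C - γstar * max (D ω) γ := by
    filter_upwards [hDnn] with ω hω
    have h1 : γstar ≤ max (D ω) γstar := le_max_right _ _
    have h2 : max (D ω) γstar ≤ max (D ω) γ := max_le_max le_rfl hγ.le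
    nlinarith
  -- integrate
  have hkey : γstar * ∫ ω, max (D ω) γ ∂μ ≤ ∫ ω, (1 / 2) * (max (D ω) γ) ^ 2 + C ∂μ := by
    have him : ∫ ω, ((1 / 2) * (max (D ω) γstar) ^ 2 + C - γstar * max (D ω) γstar) ∂μ ≤
        ∫ ω, ((1 / 2) * (max (D ω) γ) ^ 2 + C - γstar * max (D ω) γ) ∂μ :=
      integral_mono_ae (hIs2C.sub (hIs.const_mul _)) (hIγ2C.sub (hIγ.const_mul _)) hpoint
    rw [integral_sub hIs2C (hIs.const_mul _), integral_sub hIγ2C (hIγ.const_mul _),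
      integral_const_mul, integral_const_mul] at him
    linarith [him, hfix]
  have : γstar ≤ (∫ ω, (1 / 2) * (max (D ω) γ) ^ 2 + C ∂μ) / (∫ ω, max (D ω) γ ∂μ) := by
    rw [le_div_iff₀ hBpos]
    linarith [hkey]
  linarith
end

section
/- With T and γ* as in the fixed-point setup, if 0 < γ < γ* then T(γ) − γ* ≥ γ − γ*, assuming γ*/E[max(D,γ*)] ≤ 1. -/
open MeasureTheory

theorem stmt6 {Ω : Type*} [MeasurableSpace Ω] (μ : Measure Ω) [IsProbabilityMeasure μ]
    (D : Ω → ℝ) (C γ γstar : ℝ)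
    (hDmeas : Measurable D) (hDnn : ∀ᵐ ω ∂μ, 0 ≤ D ω)
    (hD2 : Integrable (fun ω => (D ω) ^ 2) μ)
    (hDpos : 0 < ∫ ω, D ω ∂μ) (hC : 0 ≤ C)
    (hfix : ∫ ω, (1 / 2) * (max (D ω) γstar) ^ 2 + C ∂μ =
      γstar * ∫ ω, max (D ω) γstar ∂μ)
    (hle : γstar ≤ ∫ ω, max (D ω) γstar ∂μ)
    (hγpos : 0 < γ) (hγ : γ < γstar) :
    γ - γstar ≤
      (∫ ω, (1 / 2) * (max (D ω) γ) ^ 2 + C ∂μ) / (∫ ω, max (D ω) γ ∂μ) - γstar := by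
  -- integrability of squares of maxima
  have hmsq : ∀ c : ℝ, Integrable (fun ω => (max (D ω) c) ^ 2) μ := by
    intro c
    apply (hD2.add (integrable_const (c ^ 2))).mono'
      ((hDmeas.max measurable_const).pow_const 2).aestronglyMeasurable
    filter_upwards with ω
    have h1 : max (D ω) c ^ 2 ≤ D ω ^ 2 + c ^ 2 := by
      rcases le_total (D ω) c with h | h
      · rw [max_eq_right h]; nlinarith [sq_nonneg (D ω)]
      · rw [max_eq_left h]; nlinarith [sq_nonneg c]
    have h2 : (0:ℝ) ≤ max (D ω) c ^ 2 := sq_nonneg _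
    simpa [abs_of_nonneg h2] using h1
  have hm : ∀ c : ℝ, Integrable (fun ω => max (D ω) c) μ := by
    intro c
    apply ((integrable_const (1:ℝ)).add (hmsq c)).mono'
      (hDmeas.max measurable_const).aestronglyMeasurable
    filter_upwards with ω
    simp only [Pi.add_apply, Real.norm_eq_abs]
    nlinarith [sq_nonneg (|max (D ω) c| - 1), abs_nonneg (max (D ω) c), sq_abs (max (D ω) c)]
  have ha2 := hmsq γ
  have hb2 := hmsq γstar
  have ha := hm γ
  have hb := hm γstar
  set Ia := ∫ ω, max (D ω) γ ∂μ with hIa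
  set Ib := ∫ ω, max (D ω) γstar ∂μ with hIb
  set N := ∫ ω, (1 / 2) * (max (D ω) γ) ^ 2 + C ∂μ with hN
  -- key integral inequality
  have hkey : ∫ ω, (1 / 2) * (max (D ω) γstar) ^ 2 + C ∂μ ≤
      ∫ ω, ((1 / 2) * (max (D ω) γ) ^ 2 + C) + γstar * (max (D ω) γstar - max (D ω) γ) ∂μ := by
    apply integral_mono
    · exact (hb2.const_mul _).add (integrable_const C)
    · exact ((ha2.const_mul _).add (integrable_const C)).add ((hb.sub ha).const_mul _)
    intro ω
    dsimp only
    rcases le_total (D ω) γstar with h | h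
    · have hbv : max (D ω) γstar = γstar := max_eq_right h
      have hav : max (D ω) γ ≤ γstar := max_le h hγ.le
      rw [hbv]
      nlinarith [sq_nonneg (max (D ω) γ - γstar)]
    · have hbv : max (D ω) γstar = D ω := max_eq_left h
      have hav : max (D ω) γ = D ω := max_eq_left (le_trans hγ.le h)
      rw [hbv, hav]; ring_nf; simp
  have h1 : Integrable (fun ω => (1 / 2) * (max (D ω) γ) ^ 2 + C) μ :=
    (ha2.const_mul _).add (integrable_const C)
  have h2 : Integrable (fun ω => γstar * (max (D ω) γstar - max (D ω) γ)) μ :=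
    (hb.sub ha).const_mul _
  have hsplit : ∫ ω, ((1 / 2) * (max (D ω) γ) ^ 2 + C) + γstar * (max (D ω) γstar - max (D ω) γ) ∂μ
      = N + γstar * (Ib - Ia) := by
    rw [integral_add h1 h2, integral_const_mul, integral_sub hb ha]
  rw [hfix, hsplit] at hkey
  -- so γstar * Ia ≤ N
  have hNge : γstar * Ia ≤ N := by linarith
  have hIapos : 0 < Ia := by
    have : (γ : ℝ) ≤ Ia := by
      have := integral_mono (integrable_const γ) ha (fun ω => le_max_right _ _)
      simpa using this
    linarith
  have hTge : γstar ≤ N / Ia := (le_div_iff₀ hIapos).mpr (by linarith)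
  linarith
end

section
/- Let D be a nonnegative random variable with E[D] = D̄ > 0 and E[D²] < ∞, let C ≥ 0, and let γ* be the fixed point satisfying E[(1/2)max(D,γ*)²+C] = γ* E[max(D,γ*)]. Then for any γ_K > 0, the excess ratio E[(1/2)max(D,γ_K)² + C]/E[max(D,γ_K)] − γ* is at most (γ_K − γ*)²/D̄. -/
open MeasureTheory

lemma key_pt (x a b : ℝ) :
    (1 / 2) * (max x a) ^ 2 - b * max x a - ((1 / 2) * (max x b) ^ 2 - b * max x b)
      ≤ (1 / 2) * (a - b) ^ 2 := by
  rcases le_total x a with h1 | h1 <;> rcases le_total x b with h2 | h2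
  · rw [max_eq_right h1, max_eq_right h2]; nlinarith
  · rw [max_eq_right h1, max_eq_left h2]; nlinarith
  · rw [max_eq_left h1, max_eq_right h2]; nlinarith
  · rw [max_eq_left h1, max_eq_left h2]; nlinarith

theorem stmt14 {Ω : Type*} [MeasurableSpace Ω] (μ : Measure Ω) [IsProbabilityMeasure μ]
    (D : Ω → ℝ) (C γK γstar : ℝ)
    (hDmeas : Measurable D) (hDnn : ∀ᵐ ω ∂μ, 0 ≤ D ω)
    (hD2 : Integrable (fun ω => (D ω) ^ 2) μ)
    (hDpos : 0 < ∫ ω, D ω ∂μ) (hC : 0 ≤ C)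
    (hfix : ∫ ω, (1 / 2) * (max (D ω) γstar) ^ 2 + C ∂μ =
      γstar * ∫ ω, max (D ω) γstar ∂μ)
    (hγK : 0 < γK) :
    (∫ ω, (1 / 2) * (max (D ω) γK) ^ 2 + C ∂μ) / (∫ ω, max (D ω) γK ∂μ) - γstar ≤
      (γK - γstar) ^ 2 / (∫ ω, D ω ∂μ) := by
  -- integrability facts
  have hDint : Integrable D μ := by
    refine (hD2.add (integrable_const 1)).mono' hDmeas.aestronglyMeasurable ?_
    filter_upwards with ω
    simp only [Pi.add_apply, Real.norm_eq_abs]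
    nlinarith [sq_nonneg (|D ω| - 1), sq_abs (D ω), abs_nonneg (D ω)]
  have hmax_int : ∀ γ : ℝ, Integrable (fun ω => max (D ω) γ) μ := by
    intro γ
    refine (hDint.abs.add (integrable_const |γ|)).mono'
      (hDmeas.max measurable_const).aestronglyMeasurable ?_
    filter_upwards with ω
    simp only [Pi.add_apply, Real.norm_eq_abs]
    refine abs_le.mpr ⟨?_, ?_⟩
    · have h1 : -(|D ω| + |γ|) ≤ D ω := by
        nlinarith [abs_nonneg γ, neg_abs_le (D ω)]
      exact h1.trans (le_max_left _ _)
    · exact max_le ((le_abs_self _).trans (by nlinarith [abs_nonneg γ]))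
        ((le_abs_self _).trans (by nlinarith [abs_nonneg (D ω)]))
  have hmaxsq_int : ∀ γ : ℝ, Integrable (fun ω => (max (D ω) γ) ^ 2) μ := by
    intro γ
    refine (hD2.add (integrable_const (γ ^ 2))).mono'
      ((hDmeas.max measurable_const).pow_const 2).aestronglyMeasurable ?_
    filter_upwards with ω
    simp only [Pi.add_apply]
    rw [Real.norm_eq_abs, abs_of_nonneg (sq_nonneg _)]
    rcases max_choice (D ω) γ with h | h <;> rw [h] <;> nlinarith [sq_nonneg (D ω), sq_nonneg γ]
  have hcomb : ∀ γ : ℝ,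
      Integrable (fun ω => (1 / 2) * (max (D ω) γ) ^ 2 - γstar * max (D ω) γ) μ := fun γ =>
    (((hmaxsq_int γ).const_mul (1 / 2)).sub ((hmax_int γ).const_mul γstar))
  have hQint : ∀ γ : ℝ, Integrable (fun ω => (1 / 2) * (max (D ω) γ) ^ 2 + C) μ := fun γ =>
    ((hmaxsq_int γ).const_mul (1 / 2)).add (integrable_const C)
  set QK := ∫ ω, (1 / 2) * (max (D ω) γK) ^ 2 + C ∂μ with hQK
  set MK := ∫ ω, max (D ω) γK ∂μ with hMK
  set Dbar := ∫ ω, D ω ∂μ with hDbar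
  -- key bound: QK - γstar * MK ≤ (1/2)(γK - γstar)^2
  have e1 : ∀ γ : ℝ, (∫ ω, (1 / 2) * (max (D ω) γ) ^ 2 - γstar * max (D ω) γ ∂μ)
      = (1 / 2) * (∫ ω, (max (D ω) γ) ^ 2 ∂μ) - γstar * ∫ ω, max (D ω) γ ∂μ := by
    intro γ
    rw [integral_sub (((hmaxsq_int γ).const_mul (1 / 2))) ((hmax_int γ).const_mul γstar),
      integral_const_mul, integral_const_mul]
  have e2 : ∀ γ : ℝ, (∫ ω, (1 / 2) * (max (D ω) γ) ^ 2 + C ∂μ)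
      = (1 / 2) * (∫ ω, (max (D ω) γ) ^ 2 ∂μ) + C := by
    intro γ
    rw [integral_add ((hmaxsq_int γ).const_mul (1 / 2)) (integrable_const C),
      integral_const_mul, integral_const]
    simp
  have hint1 : ∫ ω, (1 / 2) * (max (D ω) γK) ^ 2 - γstar * max (D ω) γK ∂μ
      = QK - C - γstar * MK := by
    rw [e1 γK, hQK, e2 γK, hMK]; ring
  have hint2 : ∫ ω, (1 / 2) * (max (D ω) γstar) ^ 2 - γstar * max (D ω) γstar ∂μ
      = -C := by
    rw [e2 γstar] at hfix
    rw [e1 γstar]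
    linarith
  have hkey : QK - γstar * MK ≤ (1 / 2) * (γK - γstar) ^ 2 := by
    have hdiff : ∫ ω, ((1 / 2) * (max (D ω) γK) ^ 2 - γstar * max (D ω) γK
        - ((1 / 2) * (max (D ω) γstar) ^ 2 - γstar * max (D ω) γstar)) ∂μ
        = QK - γstar * MK := by
      rw [integral_sub (hcomb γK) (hcomb γstar), hint1, hint2]; ring
    have hmono : ∫ ω, ((1 / 2) * (max (D ω) γK) ^ 2 - γstar * max (D ω) γK
        - ((1 / 2) * (max (D ω) γstar) ^ 2 - γstar * max (D ω) γstar)) ∂μ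
        ≤ ∫ _ω, (1 / 2) * (γK - γstar) ^ 2 ∂μ := by
      refine integral_mono ((hcomb γK).sub (hcomb γstar)) (integrable_const _) ?_
      intro ω
      exact key_pt (D ω) γK γstar
    rw [hdiff] at hmono
    simpa using hmono
  have hMD : Dbar ≤ MK :=
    integral_mono hDint (hmax_int γK) fun ω => le_max_left _ _
  have hMKpos : 0 < MK := lt_of_lt_of_le hDpos hMD
  rw [div_sub' (ne_of_gt hMKpos), div_le_div_iff₀ hMKpos hDpos]
  nlinarith [sq_nonneg (γK - γstar), mul_pos hDpos hMKpos]
end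

section
/- Let D be a nonnegative random variable with finite second moment, C ≥ 0, and γ* the fixed point of T(γ) = E[(1/2)max(D,γ)²+C]/E[max(D,γ)]. Then for any γ ∈ ℝ, the one-step drift satisfies E[(1/2)max(D,γ)² + C − γ·max(D,γ)] ≤ (γ* − γ)·E[max(D,γ*)]. -/
open MeasureTheory

theorem stmt15 {Ω : Type*} [MeasurableSpace Ω] (μ : Measure Ω) [IsProbabilityMeasure μ]
    (D : Ω → ℝ) (C γ γstar : ℝ)
    (hDmeas : Measurable D) (hDnn : ∀ᵐ ω ∂μ, 0 ≤ D ω)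
    (hD2 : Integrable (fun ω => (D ω) ^ 2) μ) (hC : 0 ≤ C)
    (hfix : ∫ ω, (1 / 2) * (max (D ω) γstar) ^ 2 + C ∂μ =
      γstar * ∫ ω, max (D ω) γstar ∂μ) :
    (∫ ω, (1 / 2) * (max (D ω) γ) ^ 2 + C - γ * max (D ω) γ ∂μ) ≤
      (γstar - γ) * ∫ ω, max (D ω) γstar ∂μ := by
  have hmeas : ∀ c : ℝ, Measurable (fun ω => max (D ω) c) :=
    fun c => hDmeas.max measurable_const
  have intM2 : ∀ c : ℝ, Integrable (fun ω => (max (D ω) c) ^ 2) μ := by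
    intro c
    refine Integrable.mono (hD2.add (integrable_const (c ^ 2)))
      (((hmeas c).pow_const 2).aestronglyMeasurable) ?_
    filter_upwards with ω
    have h : |max (D ω) c ^ 2| ≤ D ω ^ 2 + c ^ 2 := by
      rcases max_cases (D ω) c with ⟨h1, _⟩ | ⟨h1, _⟩ <;> rw [h1, abs_of_nonneg (sq_nonneg _)] <;>
        nlinarith [sq_nonneg (D ω), sq_nonneg c]
    calc |max (D ω) c ^ 2| ≤ D ω ^ 2 + c ^ 2 := h
      _ ≤ |D ω ^ 2 + c ^ 2| := le_abs_self _
  have intM : ∀ c : ℝ, Integrable (fun ω => max (D ω) c) μ := by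
    intro c
    refine Integrable.mono ((intM2 c).add (integrable_const 1))
      (hmeas c).aestronglyMeasurable ?_
    filter_upwards with ω
    have h1 : |max (D ω) c| ≤ max (D ω) c ^ 2 + 1 := by
      nlinarith [abs_nonneg (max (D ω) c), sq_abs (max (D ω) c)]
    calc |max (D ω) c| ≤ max (D ω) c ^ 2 + 1 := h1
      _ ≤ |max (D ω) c ^ 2 + 1| := le_abs_self _
  have intG : Integrable (fun ω => (1 / 2) * (max (D ω) γ) ^ 2 + C - γ * max (D ω) γ) μ :=
    (((intM2 γ).const_mul _).add (integrable_const C)).sub ((intM γ).const_mul _)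
  have intH : Integrable (fun ω => (1 / 2) * (max (D ω) γstar) ^ 2 + C - γ * max (D ω) γstar) μ :=
    (((intM2 γstar).const_mul _).add (integrable_const C)).sub ((intM γstar).const_mul _)
  have hpt : ∀ ω, (1 / 2) * (max (D ω) γ) ^ 2 + C - γ * max (D ω) γ ≤
      (1 / 2) * (max (D ω) γstar) ^ 2 + C - γ * max (D ω) γstar := by
    intro ω
    have hℓ : D ω ≤ max (D ω) γstar := le_max_left _ _
    rcases max_cases (D ω) γ with ⟨h1, h2⟩ | ⟨h1, h2⟩ <;> rw [h1] <;>
      nlinarith [sq_nonneg (max (D ω) γstar - γ)]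
  have hle : (∫ ω, (1 / 2) * (max (D ω) γ) ^ 2 + C - γ * max (D ω) γ ∂μ) ≤
      ∫ ω, (1 / 2) * (max (D ω) γstar) ^ 2 + C - γ * max (D ω) γstar ∂μ :=
    integral_mono intG intH hpt
  have heq : (∫ ω, (1 / 2) * (max (D ω) γstar) ^ 2 + C - γ * max (D ω) γstar ∂μ) =
      (γstar - γ) * ∫ ω, max (D ω) γstar ∂μ := by
    have hA : Integrable (fun ω => (1 / 2) * (max (D ω) γstar) ^ 2 + C) μ :=
      ((intM2 γstar).const_mul _).add (integrable_const C)
    rw [integral_sub hA ((intM γstar).const_mul _), hfix, integral_const_mul]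
    ring
  linarith
end

section
/- With D, C, γ* as in the drift setup, for any γ ∈ ℝ: E[(1/2)max(D,γ)² + C − γ*·max(D,γ)] ≤ −(γ* − γ)·(E[max(D,γ)] − E[max(D,γ*)]). -/
open MeasureTheory

theorem stmt16 {Ω : Type*} [MeasurableSpace Ω] (μ : Measure Ω) [IsProbabilityMeasure μ]
    (D : Ω → ℝ) (C γ γstar : ℝ)
    (hDmeas : Measurable D) (hDnn : ∀ᵐ ω ∂μ, 0 ≤ D ω)
    (hD2 : Integrable (fun ω => (D ω) ^ 2) μ) (hC : 0 ≤ C)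
    (hfix : ∫ ω, (1 / 2) * (max (D ω) γstar) ^ 2 + C ∂μ =
      γstar * ∫ ω, max (D ω) γstar ∂μ) :
    (∫ ω, (1 / 2) * (max (D ω) γ) ^ 2 + C - γstar * max (D ω) γ ∂μ) ≤
      -((γstar - γ) * ((∫ ω, max (D ω) γ ∂μ) - ∫ ω, max (D ω) γstar ∂μ)) := by
  have hDint : Integrable D μ := by
    refine (hD2.add (integrable_const 1)).mono' hDmeas.aestronglyMeasurable ?_
    filter_upwards with ω
    have h := sq_nonneg (|D ω| - 1)
    have h2 : |D ω| ^ 2 = D ω ^ 2 := sq_abs _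
    simp only [Real.norm_eq_abs, Pi.add_apply]
    nlinarith [abs_nonneg (D ω)]
  have intMax : ∀ c : ℝ, Integrable (fun ω => max (D ω) c) μ := by
    intro c
    refine (hDint.abs.add (integrable_const |c|)).mono'
      (hDmeas.max measurable_const).aestronglyMeasurable ?_
    filter_upwards with ω
    simp only [Real.norm_eq_abs, Pi.add_apply]
    rcases max_cases (D ω) c with ⟨h1, _⟩ | ⟨h1, _⟩ <;> rw [h1] <;>
      [skip; skip] <;> nlinarith [abs_nonneg (D ω), abs_nonneg c, le_abs_self (D ω),
        le_abs_self c, neg_abs_le (D ω), neg_abs_le c]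
  have intMaxSq : ∀ c : ℝ, Integrable (fun ω => (max (D ω) c) ^ 2) μ := by
    intro c
    refine ((hD2.const_mul 2).add (integrable_const (2 * c ^ 2))).mono'
      ((hDmeas.max measurable_const).pow_const 2).aestronglyMeasurable ?_
    filter_upwards with ω
    simp only [Real.norm_eq_abs, Pi.add_apply]
    rcases max_cases (D ω) c with ⟨h1, _⟩ | ⟨h1, _⟩ <;> rw [h1] <;>
      rw [abs_of_nonneg (sq_nonneg _)] <;> nlinarith [sq_nonneg (D ω), sq_nonneg c]
  -- key pointwise inequality
  have hpt : ∀ ω, (1 / 2) * (max (D ω) γ) ^ 2 - γ * max (D ω) γ ≤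
      (1 / 2) * (max (D ω) γstar) ^ 2 - γ * max (D ω) γstar := by
    intro ω
    have hb : max (D ω) γstar ≥ D ω := le_max_left _ _
    rcases max_cases (D ω) γ with ⟨h1, h2⟩ | ⟨h1, h2⟩ <;> rw [h1] <;>
      nlinarith [sq_nonneg (max (D ω) γstar - γ)]
  have hkey : ∫ ω, (1 / 2) * (max (D ω) γ) ^ 2 - γ * max (D ω) γ ∂μ ≤
      ∫ ω, (1 / 2) * (max (D ω) γstar) ^ 2 - γ * max (D ω) γstar ∂μ := by
    refine integral_mono ?_ ?_ hpt
    · exact ((intMaxSq γ).const_mul _).sub ((intMax γ).const_mul γ)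
    · exact ((intMaxSq γstar).const_mul _).sub ((intMax γstar).const_mul γ)
  -- expand integrals
  have e1 : ∀ c : ℝ, ∫ ω, (1 / 2) * (max (D ω) c) ^ 2 - γ * max (D ω) c ∂μ =
      (1 / 2) * (∫ ω, (max (D ω) c) ^ 2 ∂μ) - γ * ∫ ω, max (D ω) c ∂μ := by
    intro c
    rw [integral_sub (((intMaxSq c).const_mul _)) ((intMax c).const_mul γ),
      integral_const_mul, integral_const_mul]
  have e2 : ∀ c : ℝ, ∫ ω, (1 / 2) * (max (D ω) c) ^ 2 + C ∂μ =
      (1 / 2) * (∫ ω, (max (D ω) c) ^ 2 ∂μ) + C := by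
    intro c
    rw [integral_add (((intMaxSq c).const_mul _)) (integrable_const C),
      integral_const_mul, integral_const]
    simp
  have e3 : ∫ ω, (1 / 2) * (max (D ω) γ) ^ 2 + C - γstar * max (D ω) γ ∂μ =
      (1 / 2) * (∫ ω, (max (D ω) γ) ^ 2 ∂μ) + C - γstar * ∫ ω, max (D ω) γ ∂μ := by
    have hI1 : Integrable (fun ω => (1 / 2 : ℝ) * (max (D ω) γ) ^ 2 + C) μ :=
      ((intMaxSq γ).const_mul _).add (integrable_const C)
    have hI2 : Integrable (fun ω => γstar * max (D ω) γ) μ := (intMax γ).const_mul γstar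
    rw [integral_sub hI1 hI2, e2, integral_const_mul]
  rw [e1, e1] at hkey
  rw [e2] at hfix
  rw [e3]
  nlinarith [hkey, hfix]
end

section
/- With D, C, γ* as in the drift setup and D̄ := E[D] > 0, for any γ ∈ ℝ the product (γ − γ*)·E[(1/2)max(D,γ)² + C − γ·max(D,γ)] ≤ −(γ − γ*)²·D̄. (The inequality holds in both cases γ ≥ γ* and γ ≤ γ*.) -/
open MeasureTheory

lemma ptwise17 (d a b : ℝ) (h : b ≤ a) :
    (1/2) * (max d a) ^ 2 - a * max d a ≤ (1/2) * (max d b) ^ 2 - a * max d b := by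
  rcases le_total d a with h1 | h1
  · rw [max_eq_right h1]
    nlinarith [sq_nonneg (max d b - a)]
  · rw [max_eq_left h1, max_eq_left (h.trans h1)]

theorem stmt17 {Ω : Type*} [MeasurableSpace Ω] (μ : Measure Ω) [IsProbabilityMeasure μ]
    (D : Ω → ℝ) (C γ γstar : ℝ)
    (hDmeas : Measurable D) (hDnn : ∀ᵐ ω ∂μ, 0 ≤ D ω)
    (hD2 : Integrable (fun ω => (D ω) ^ 2) μ)
    (hDpos : 0 < ∫ ω, D ω ∂μ) (hC : 0 ≤ C)
    (hfix : ∫ ω, (1 / 2) * (max (D ω) γstar) ^ 2 + C ∂μ =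
      γstar * ∫ ω, max (D ω) γstar ∂μ) :
    (γ - γstar) * ∫ ω, (1 / 2) * (max (D ω) γ) ^ 2 + C - γ * max (D ω) γ ∂μ ≤
      -((γ - γstar) ^ 2 * ∫ ω, D ω ∂μ) := by
  have hDint : Integrable D μ :=
    ((memLp_two_iff_integrable_sq hDmeas.aestronglyMeasurable).mpr hD2).integrable (by norm_num)
  have hmax : ∀ c : ℝ, Integrable (fun ω => max (D ω) c) μ := fun c =>
    hDint.sup (integrable_const c)
  have hmaxsq : ∀ c : ℝ, Integrable (fun ω => (max (D ω) c) ^ 2) μ := by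
    intro c
    refine (hD2.add (integrable_const (c ^ 2))).mono'
      ((hDmeas.max measurable_const).pow_const 2).aestronglyMeasurable ?_
    filter_upwards with ω
    rw [Real.norm_eq_abs, abs_of_nonneg (by positivity)]
    rcases max_cases (D ω) c with ⟨h1, _⟩ | ⟨h1, _⟩ <;> rw [h1] <;> simp only [Pi.add_apply] <;>
      nlinarith [sq_nonneg (D ω), sq_nonneg c]
  have hsum : ∀ c : ℝ, Integrable (fun ω => (1/2) * (max (D ω) c) ^ 2 + C) μ := fun c =>
    ((hmaxsq c).const_mul (1/2)).add (integrable_const C)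
  have key : ∀ a c : ℝ, ∫ ω, (1/2) * (max (D ω) c) ^ 2 + C - a * max (D ω) c ∂μ
      = (∫ ω, (1/2) * (max (D ω) c) ^ 2 + C ∂μ) - a * ∫ ω, max (D ω) c ∂μ := by
    intro a c
    rw [integral_sub (hsum c) ((hmax c).const_mul a), integral_const_mul]
  set Im := ∫ ω, max (D ω) γ ∂μ with hImdef
  set Is := ∫ ω, max (D ω) γstar ∂μ with hIsdef
  set Db := ∫ ω, D ω ∂μ with hDbdef
  have hIs : Db ≤ Is := integral_mono hDint (hmax γstar) (fun ω => le_max_left _ _)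
  have hIm : Db ≤ Im := integral_mono hDint (hmax γ) (fun ω => le_max_left _ _)
  rcases le_total γstar γ with h | h
  · have p1 : ∫ ω, (1/2) * (max (D ω) γ) ^ 2 + C - γ * max (D ω) γ ∂μ ≤
        ∫ ω, (1/2) * (max (D ω) γstar) ^ 2 + C - γ * max (D ω) γstar ∂μ := by
      refine integral_mono ((hsum γ).sub ((hmax γ).const_mul γ))
        ((hsum γstar).sub ((hmax γstar).const_mul γ)) (fun ω => ?_)
      have := ptwise17 (D ω) γ γstar h
      simp only; linarith
    rw [key γ γstar, hfix] at p1
    have p2 : ∫ ω, (1/2) * (max (D ω) γ) ^ 2 + C - γ * max (D ω) γ ∂μ ≤ (γstar - γ) * Is := by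
      rw [hIsdef]; linarith [p1]
    have h1 : (γ - γstar) * (∫ ω, (1/2) * (max (D ω) γ) ^ 2 + C - γ * max (D ω) γ ∂μ) ≤
        (γ - γstar) * ((γstar - γ) * Is) :=
      mul_le_mul_of_nonneg_left p2 (by linarith)
    nlinarith [mul_le_mul_of_nonneg_left hIs (sq_nonneg (γ - γstar))]
  · have p1 : ∫ ω, (1/2) * (max (D ω) γstar) ^ 2 + C - γstar * max (D ω) γstar ∂μ ≤
        ∫ ω, (1/2) * (max (D ω) γ) ^ 2 + C - γstar * max (D ω) γ ∂μ := by
      refine integral_mono ((hsum γstar).sub ((hmax γstar).const_mul γstar))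
        ((hsum γ).sub ((hmax γ).const_mul γstar)) (fun ω => ?_)
      have := ptwise17 (D ω) γstar γ h
      simp only; linarith
    rw [key γstar γstar, key γstar γ, hfix] at p1
    -- p1 : γstar * Is - γstar * Is ≤ ∫ (1/2) m² + C − γstar * Im
    have p3 : γstar * Im ≤ ∫ ω, (1/2) * (max (D ω) γ) ^ 2 + C ∂μ := by linarith
    have p4 : (γstar - γ) * Im ≤ ∫ ω, (1/2) * (max (D ω) γ) ^ 2 + C - γ * max (D ω) γ ∂μ := by
      rw [key γ γ]; linarith
    have h1 : (γ - γstar) * (∫ ω, (1/2) * (max (D ω) γ) ^ 2 + C - γ * max (D ω) γ ∂μ) ≤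
        (γ - γstar) * ((γstar - γ) * Im) :=
      mul_le_mul_of_nonpos_left p4 (by linarith)
    nlinarith [mul_le_mul_of_nonneg_left hIm (sq_nonneg (γ - γstar))]
end
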